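/- (Schäffer-type model: structure of Γ_n-isometric lifts built on the Schäffer dilation.) Let n ≥ 2 and let (S_1,…,S_n) be a commuting tuple of bounded operators on a complex Hilbert space H with S_n a contraction; write 𝒟 := 𝒟_{S_n}. Let 𝐃 : H → ℓ²(ℕ,𝒟) be the operator 𝐃h := (D_{S_n} h, 0, 0, …), and let Ŵ_n be the block operator [[S_n, 0],[𝐃, S]] on H ⊕ ℓ²(ℕ,𝒟) (the Schäffer isometric dilation of S_n). For i = 1,…,n−1 let X_i : H → ℓ²(ℕ,𝒟) and Y_i on ℓ²(ℕ,𝒟) be bounded operators and set Ŵ_i := [[S_i, 0],[X_i, Y_i]]. Assume that (Ŵ_1,…,Ŵ_n) is a commuting tuple and that Ŵ_i = Ŵ_{n−i}* Ŵ_n for every i = 1,…,n−1. Then there exist unique bounded operators F_1,…,F_{n−1} on 𝒟 such that for each i = 1,…,n−1: Y_i = (F_i)~ + S∘(F_{n−i}*)~ (the Toeplitz operator with symbol Ψ_i(z) = F_i + z F_{n−i}*), X_i h = (F_{n−i}* D_{S_n} h, 0, 0, …) for all h ∈ H, and S_i − S_{n−i}* S_n = D_{S_n} F_i D_{S_n}.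 -/

import Mathlib

noncomputable section

open scoped ENNReal

namespace GammaModel

variable {E : Type*} [NormedAddCommGroup E] [NormedSpace ℂ E]

/-- The `E`-valued Hardy space `H²_E(𝔻)`, identified with `ℓ²(ℕ, E)`. -/
abbrev L2 (E : Type*) [NormedAddCommGroup E] [NormedSpace ℂ E] : Type _ :=
  lp (fun _ : ℕ => E) 2

/-- The underlying function of the unilateral shift. -/
def shiftFun (f : ℕ → E) : ℕ → E
  | 0 => 0
  | (k + 1) => f k

lemma rpow_toReal_two (x : ℝ) : x ^ ((2 : ℝ≥0∞)).toReal = x ^ (2 : ℕ) := by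
  rw [show ((2 : ℝ≥0∞)).toReal = ((2 : ℕ) : ℝ) by norm_num, Real.rpow_natCast]

lemma summable_sq_of_mem (f : L2 E) :
    Summable (fun k => ‖(f : ∀ _ : ℕ, E) k‖ ^ (2 : ℕ)) := by
  have h := lp.memℓp f
  rw [memℓp_gen_iff (by norm_num)] at h
  simpa [rpow_toReal_two] using h

lemma memℓp_shiftFun (f : L2 E) : Memℓp (shiftFun (f : ∀ _ : ℕ, E)) 2 := by
  rw [memℓp_gen_iff (by norm_num)]
  apply (summable_nat_add_iff 1).mp
  simpa [shiftFun, rpow_toReal_two] using summable_sq_of_mem f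

/-- The unilateral shift as a linear map on `ℓ²(ℕ, E)`. -/
def shiftLM : L2 E →ₗ[ℂ] L2 E where
  toFun f := ⟨shiftFun (f : ∀ _ : ℕ, E), memℓp_shiftFun f⟩
  map_add' f g := by
    ext k
    cases k <;> simp [shiftFun, lp.coeFn_add, Pi.add_apply] <;> erw [Pi.add_apply] <;> simp [shiftFun]
  map_smul' c f := by
    ext k
    cases k <;> simp [shiftFun, lp.coeFn_smul, Pi.smul_apply]

lemma norm_shiftLM (f : L2 E) : ‖shiftLM f‖ = ‖f‖ := by
  have h2 : (0:ℝ) < ((2 : ℝ≥0∞)).toReal := by norm_num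
  have hs := lp.norm_rpow_eq_tsum h2 (shiftLM f)
  have hf := lp.norm_rpow_eq_tsum h2 f
  have hsum : Summable (fun k => ‖(shiftLM f : ∀ _ : ℕ, E) k‖ ^ ((2:ℝ≥0∞)).toReal) := by
    have h := memℓp_shiftFun f
    rw [memℓp_gen_iff h2] at h
    exact h
  have key : ∑' k, ‖(shiftLM f : ∀ _ : ℕ, E) k‖ ^ ((2:ℝ≥0∞)).toReal
      = ∑' k, ‖(f : ∀ _ : ℕ, E) k‖ ^ ((2:ℝ≥0∞)).toReal := by
    rw [hsum.tsum_eq_zero_add]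
    simp [shiftLM, shiftFun]
  have : ‖shiftLM f‖ ^ ((2:ℝ≥0∞)).toReal = ‖f‖ ^ ((2:ℝ≥0∞)).toReal := by
    rw [hs, hf, key]
  rw [rpow_toReal_two, rpow_toReal_two] at this
  have h1 : (0:ℝ) ≤ ‖shiftLM f‖ := norm_nonneg _
  have h2' : (0:ℝ) ≤ ‖f‖ := norm_nonneg _
  nlinarith [this, h1, h2']

/-- The unilateral shift `S` on `ℓ²(ℕ, E)`: `(Sf)(0) = 0`, `(Sf)(k+1) = f(k)`. -/
def shiftL : L2 E →L[ℂ] L2 E :=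
  LinearMap.mkContinuous shiftLM 1 (fun f => by rw [norm_shiftLM]; simp)

@[simp] lemma shiftL_apply_zero (f : L2 E) : (shiftL f : ∀ _ : ℕ, E) 0 = 0 := rfl

@[simp] lemma shiftL_apply_succ (f : L2 E) (k : ℕ) :
    (shiftL f : ∀ _ : ℕ, E) (k + 1) = (f : ∀ _ : ℕ, E) k := rfl

lemma memℓp_diagFun (C : E →L[ℂ] E) (f : L2 E) :
    Memℓp (fun k => C ((f : ∀ _ : ℕ, E) k)) 2 := by
  rw [memℓp_gen_iff (by norm_num)]
  have hf := summable_sq_of_mem f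
  refine Summable.of_nonneg_of_le (f := fun k => ‖C‖ ^ (2:ℕ) * ‖(f : ∀ _ : ℕ, E) k‖ ^ (2:ℕ))
    (fun k => by positivity) (fun k => ?_) (hf.mul_left _)
  show ‖C ((f : ∀ _ : ℕ, E) k)‖ ^ ((2:ℝ≥0∞)).toReal ≤ ‖C‖ ^ (2:ℕ) * ‖(f : ∀ _ : ℕ, E) k‖ ^ (2:ℕ)
  rw [rpow_toReal_two, ← mul_pow]
  exact pow_le_pow_left₀ (norm_nonneg _) (C.le_opNorm _) 2

/-- The diagonal operator `C̃` on `ℓ²(ℕ, E)`: `(C̃ f)(k) = C (f k)`. -/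
def diagLM (C : E →L[ℂ] E) : L2 E →ₗ[ℂ] L2 E where
  toFun f := ⟨fun k => C ((f : ∀ _ : ℕ, E) k), memℓp_diagFun C f⟩
  map_add' f g := by ext k; simp [lp.coeFn_add, Pi.add_apply]; rfl
  map_smul' c f := by ext k; simp [lp.coeFn_smul, Pi.smul_apply]

lemma norm_diagLM (C : E →L[ℂ] E) (f : L2 E) : ‖diagLM C f‖ ≤ ‖C‖ * ‖f‖ := by
  have h2 : (0:ℝ) < ((2 : ℝ≥0∞)).toReal := by norm_num
  have hs := lp.norm_rpow_eq_tsum h2 (diagLM C f)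
  have hf := lp.norm_rpow_eq_tsum h2 f
  have hsum : Summable (fun k => ‖(diagLM C f : ∀ _ : ℕ, E) k‖ ^ ((2:ℝ≥0∞)).toReal) := by
    have h := memℓp_diagFun C f
    rw [memℓp_gen_iff h2] at h
    exact h
  have hle : ‖diagLM C f‖ ^ (2:ℕ) ≤ (‖C‖ * ‖f‖) ^ (2:ℕ) := by
    rw [← rpow_toReal_two, hs]
    calc ∑' k, ‖(diagLM C f : ∀ _ : ℕ, E) k‖ ^ ((2:ℝ≥0∞)).toReal
        ≤ ∑' k, ‖C‖ ^ (2:ℕ) * ‖(f : ∀ _ : ℕ, E) k‖ ^ (2:ℕ) := by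
          apply Summable.tsum_le_tsum _ hsum ((summable_sq_of_mem f).mul_left _)
          intro k
          show ‖(diagLM C f : ∀ _ : ℕ, E) k‖ ^ ((2:ℝ≥0∞)).toReal
            ≤ ‖C‖ ^ (2:ℕ) * ‖(f : ∀ _ : ℕ, E) k‖ ^ (2:ℕ)
          rw [rpow_toReal_two, ← mul_pow]
          exact pow_le_pow_left₀ (norm_nonneg _) (C.le_opNorm _) 2
      _ = ‖C‖ ^ (2:ℕ) * ∑' k, ‖(f : ∀ _ : ℕ, E) k‖ ^ (2:ℕ) := by rw [tsum_mul_left]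
      _ = (‖C‖ * ‖f‖) ^ (2:ℕ) := by
          rw [mul_pow]
          congr 1
          rw [← rpow_toReal_two ‖f‖, hf]
          exact (tsum_congr (fun k => by rw [rpow_toReal_two])).symm
  have := le_of_pow_le_pow_left₀ (by norm_num) (by positivity) hle
  exact this

/-- The operator `C̃` on `ℓ²(ℕ, E)` induced by `C : E →L[ℂ] E`, `(C̃ f)(k) = C (f k)`. -/
def diagL (C : E →L[ℂ] E) : L2 E →L[ℂ] L2 E :=
  LinearMap.mkContinuous (diagLM C) ‖C‖ (norm_diagLM C)

@[simp] lemma diagL_apply (C : E →L[ℂ] E) (f : L2 E) (k : ℕ) :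
    (diagL C f : ∀ _ : ℕ, E) k = C ((f : ∀ _ : ℕ, E) k) := rfl

end GammaModel

noncomputable section

namespace GammaModel

variable {H K : Type*} [NormedAddCommGroup H] [NormedSpace ℂ H]
  [NormedAddCommGroup K] [NormedSpace ℂ K]

/-- The block-diagonal operator `A ⊕ B` on the Hilbert space direct sum `H ⊕ K`
(realized as `WithLp 2 (H × K)`). -/
def blockDiag (A : H →L[ℂ] H) (B : K →L[ℂ] K) :
    WithLp 2 (H × K) →L[ℂ] WithLp 2 (H × K) :=
  ((WithLp.prodContinuousLinearEquiv 2 ℂ H K).symm : H × K →L[ℂ] WithLp 2 (H × K)).comp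
    ((A.prodMap B).comp
      ((WithLp.prodContinuousLinearEquiv 2 ℂ H K) : WithLp 2 (H × K) →L[ℂ] H × K))

/-- A lower-triangular `2 × 2` block operator `[[A, 0], [C, D]]` on the Hilbert space
direct sum `H ⊕ K` (realized as `WithLp 2 (H × K)`). -/
def blockLT (A : H →L[ℂ] H) (C : H →L[ℂ] K) (D : K →L[ℂ] K) :
    WithLp 2 (H × K) →L[ℂ] WithLp 2 (H × K) :=
  ((WithLp.prodContinuousLinearEquiv 2 ℂ H K).symm : H × K →L[ℂ] WithLp 2 (H × K)).comp
    (((A.comp (ContinuousLinearMap.fst ℂ H K)).prod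
        ((C.comp (ContinuousLinearMap.fst ℂ H K)) + (D.comp (ContinuousLinearMap.snd ℂ H K)))).comp
      ((WithLp.prodContinuousLinearEquiv 2 ℂ H K) : WithLp 2 (H × K) →L[ℂ] H × K))

end GammaModel

namespace GammaModel

instance completeSpace_topologicalClosure {H : Type*} [NormedAddCommGroup H] [NormedSpace ℂ H]
    [CompleteSpace H] (K : Submodule ℂ H) : CompleteSpace ↥(K.topologicalClosure) :=
  K.isClosed_topologicalClosure.completeSpace_coe

end GammaModel


set_option linter.unusedSectionVars false

noncomputable section AuxToeplitz

namespace GammaModel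

open ContinuousLinearMap
open scoped InnerProductSpace

variable {E : Type*} [NormedAddCommGroup E] [InnerProductSpace ℂ E] [CompleteSpace E]

lemma lp_single_add (m : ℕ) (x y : E) :
    (lp.single 2 m (x + y) : L2 E) = lp.single 2 m x + lp.single 2 m y := by
  ext j
  rw [lp.coeFn_add, Pi.add_apply]
  by_cases h : j = m
  · subst h
    rw [lp.single_apply_self, lp.single_apply_self, lp.single_apply_self]
  · rw [lp.single_apply_ne _ _ _ h, lp.single_apply_ne _ _ _ h, lp.single_apply_ne _ _ _ h,
      add_zero]

/-- `lp.single` as a continuous linear map. -/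
def singleCLM (m : ℕ) : E →L[ℂ] L2 E :=
  LinearMap.mkContinuous
    { toFun := fun x => lp.single 2 m x
      map_add' := fun x y => lp_single_add m x y
      map_smul' := fun c x => by simp }
    1 (fun x => by
      rw [one_mul]
      exact le_of_eq (lp.norm_single (E := fun _ : ℕ => E) (p := 2) (by norm_num) m x))

@[simp] lemma singleCLM_apply (m : ℕ) (x : E) : singleCLM m x = (lp.single 2 m x : L2 E) := rfl

/-- evaluation at `k` as a continuous linear map. -/
def evalCLM (k : ℕ) : L2 E →L[ℂ] E :=
  LinearMap.mkContinuous
    { toFun := fun f : L2 E => (f : ∀ _ : ℕ, E) k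
      map_add' := fun f g => rfl
      map_smul' := fun c f => rfl }
    1 (fun f => by
      rw [one_mul]
      exact lp.norm_apply_le_norm (by norm_num) f k)

@[simp] lemma evalCLM_apply (k : ℕ) (f : L2 E) : evalCLM k f = (f : ∀ _ : ℕ, E) k := rfl

lemma shiftL_single (m : ℕ) (x : E) :
    shiftL (lp.single 2 m x : L2 E) = lp.single 2 (m + 1) x := by
  ext k
  cases k with
  | zero =>
      rw [shiftL_apply_zero, lp.single_apply_ne _ _ _ (by omega : (0 : ℕ) ≠ m + 1)]
  | succ k =>
      rw [shiftL_apply_succ]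
      by_cases h : k = m
      · subst h; rw [lp.single_apply_self, lp.single_apply_self]
      · rw [lp.single_apply_ne _ _ _ h, lp.single_apply_ne _ _ _ (by omega : k + 1 ≠ m + 1)]

/-- The `(k, m)` matrix entry of an operator on `ℓ²(ℕ, E)`. -/
def entryOp (A : L2 E →L[ℂ] L2 E) (k m : ℕ) : E →L[ℂ] E :=
  (evalCLM k).comp (A.comp (singleCLM m))

@[simp] lemma entryOp_apply (A : L2 E →L[ℂ] L2 E) (k m : ℕ) (x : E) :
    entryOp A k m x = (A (lp.single 2 m x) : ∀ _ : ℕ, E) k := rfl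

/-- The `(0,0)` entry of an operator on `ℓ²(ℕ, E)`. -/
def Fop (A : L2 E →L[ℂ] L2 E) : E →L[ℂ] E := entryOp A 0 0

lemma my_adjoint_zero : adjoint (0 : E →L[ℂ] E) = 0 := by
  ext x
  apply ext_inner_left ℂ
  intro v
  rw [adjoint_inner_right]
  simp

lemma entry_shift (A : L2 E →L[ℂ] L2 E) (hA : ∀ f, A (shiftL f) = shiftL (A f)) (k m : ℕ) :
    entryOp A (k + 1) (m + 1) = entryOp A k m := by
  ext x
  rw [entryOp_apply, entryOp_apply, ← shiftL_single, hA, shiftL_apply_succ]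

lemma entry_zero_shift (A : L2 E →L[ℂ] L2 E) (hA : ∀ f, A (shiftL f) = shiftL (A f)) (m : ℕ) :
    entryOp A 0 (m + 1) = 0 := by
  ext x
  rw [entryOp_apply, ← shiftL_single, hA, shiftL_apply_zero, ContinuousLinearMap.zero_apply]

lemma entry_diag (A : L2 E →L[ℂ] L2 E) (hA : ∀ f, A (shiftL f) = shiftL (A f)) (k : ℕ) :
    entryOp A k k = Fop A := by
  induction k with
  | zero => rfl
  | succ k ih => rw [entry_shift A hA, ih]

lemma entry_shift_add (A : L2 E →L[ℂ] L2 E) (hA : ∀ f, A (shiftL f) = shiftL (A f))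
    (d k m : ℕ) : entryOp A (k + d) (m + d) = entryOp A k m := by
  induction d with
  | zero => rfl
  | succ d ih => rw [show k + (d + 1) = (k + d) + 1 by omega, show m + (d + 1) = (m + d) + 1 by omega,
      entry_shift A hA, ih]

lemma entry_eq_zero_of_lt (A : L2 E →L[ℂ] L2 E) (hA : ∀ f, A (shiftL f) = shiftL (A f)) :
    ∀ k m : ℕ, k < m → entryOp A k m = 0 := by
  intro k
  induction k with
  | zero =>
      intro m hm
      obtain ⟨m', rfl⟩ : ∃ m', m = m' + 1 := ⟨m - 1, by omega⟩
      exact entry_zero_shift A hA m'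
  | succ k ih =>
      intro m hm
      obtain ⟨m', rfl⟩ : ∃ m', m = m' + 1 := ⟨m - 1, by omega⟩
      rw [entry_shift A hA]
      exact ih m' (by omega)

lemma entry_rel (Y₁ Y₂ : L2 E →L[ℂ] L2 E)
    (h : ∀ f g, ⟪Y₁ f, g⟫_ℂ = ⟪shiftL f, Y₂ g⟫_ℂ) (k m : ℕ) :
    entryOp Y₁ k m = adjoint (entryOp Y₂ (m + 1) k) := by
  ext x
  apply ext_inner_right ℂ
  intro y
  rw [adjoint_inner_left]
  rw [entryOp_apply, entryOp_apply]
  rw [← lp.inner_single_right (𝕜 := ℂ), h, shiftL_single, lp.inner_single_left]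

lemma entry_subdiag (Y₁ Y₂ : L2 E →L[ℂ] L2 E)
    (h : ∀ f g, ⟪Y₁ f, g⟫_ℂ = ⟪shiftL f, Y₂ g⟫_ℂ)
    (hc1 : ∀ f, Y₁ (shiftL f) = shiftL (Y₁ f))
    (hc2 : ∀ f, Y₂ (shiftL f) = shiftL (Y₂ f)) (m : ℕ) :
    entryOp Y₁ (m + 1) m = adjoint (Fop Y₂) := by
  have h1 : entryOp Y₁ (m + 1) m = entryOp Y₁ 1 0 := by
    have := entry_shift_add Y₁ hc1 m 1 0
    rw [show 1 + m = m + 1 by omega, show 0 + m = m by omega] at this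
    exact this
  rw [h1, entry_rel Y₁ Y₂ h 1 0, entry_diag Y₂ hc2 1]

lemma entry_eq_zero_of_gt (Y₁ Y₂ : L2 E →L[ℂ] L2 E)
    (h : ∀ f g, ⟪Y₁ f, g⟫_ℂ = ⟪shiftL f, Y₂ g⟫_ℂ)
    (hc1 : ∀ f, Y₁ (shiftL f) = shiftL (Y₁ f))
    (hc2 : ∀ f, Y₂ (shiftL f) = shiftL (Y₂ f)) (k m : ℕ) (hk : m + 2 ≤ k) :
    entryOp Y₁ k m = 0 := by
  have h1 : entryOp Y₁ k m = entryOp Y₁ (k - m) 0 := by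
    have := entry_shift_add Y₁ hc1 m (k - m) 0
    rw [show k - m + m = k by omega, show 0 + m = m by omega] at this
    exact this
  rw [h1, entry_rel Y₁ Y₂ h (k - m) 0,
    entry_eq_zero_of_lt Y₂ hc2 1 (k - m) (by omega), my_adjoint_zero]

lemma adjoint_apply_component (A : L2 E →L[ℂ] L2 E) (k m : ℕ) (y : E) :
    (adjoint A (lp.single 2 k y) : ∀ _ : ℕ, E) m = adjoint (entryOp A k m) y := by
  apply ext_inner_left ℂ
  intro x
  calc ⟪x, (adjoint A (lp.single 2 k y) : ∀ _ : ℕ, E) m⟫_ℂ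
      = ⟪(lp.single 2 m x : L2 E), adjoint A (lp.single 2 k y)⟫_ℂ :=
        (lp.inner_single_left (𝕜 := ℂ) m x (adjoint A (lp.single 2 k y))).symm
    _ = ⟪A (lp.single 2 m x), lp.single 2 k y⟫_ℂ := adjoint_inner_right _ _ _
    _ = ⟪(A (lp.single 2 m x) : ∀ _ : ℕ, E) k, y⟫_ℂ := lp.inner_single_right _ _ _
    _ = ⟪entryOp A k m x, y⟫_ℂ := rfl
    _ = ⟪x, adjoint (entryOp A k m) y⟫_ℂ := (adjoint_inner_right _ _ _).symm

lemma apply_component_zero (Y₁ Y₂ : L2 E →L[ℂ] L2 E)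
    (h : ∀ f g, ⟪Y₁ f, g⟫_ℂ = ⟪shiftL f, Y₂ g⟫_ℂ)
    (hc1 : ∀ f, Y₁ (shiftL f) = shiftL (Y₁ f))
    (f : L2 E) :
    (Y₁ f : ∀ _ : ℕ, E) 0 = Fop Y₁ ((f : ∀ _ : ℕ, E) 0) := by
  apply ext_inner_right ℂ
  intro y
  calc ⟪(Y₁ f : ∀ _ : ℕ, E) 0, y⟫_ℂ
      = ⟪Y₁ f, lp.single 2 0 y⟫_ℂ := (lp.inner_single_right _ _ _).symm
    _ = ⟪f, adjoint Y₁ (lp.single 2 0 y)⟫_ℂ := (adjoint_inner_right _ _ _).symm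
    _ = ∑' m : ℕ, ⟪(f : ∀ _ : ℕ, E) m, (adjoint Y₁ (lp.single 2 0 y) : ∀ _ : ℕ, E) m⟫_ℂ :=
        lp.inner_eq_tsum _ _
    _ = ⟪(f : ∀ _ : ℕ, E) 0, (adjoint Y₁ (lp.single 2 0 y) : ∀ _ : ℕ, E) 0⟫_ℂ := by
        apply tsum_eq_single 0
        intro m hm
        rw [adjoint_apply_component, entry_eq_zero_of_lt Y₁ hc1 0 m (by omega),
          my_adjoint_zero]
        simp
    _ = ⟪(f : ∀ _ : ℕ, E) 0, adjoint (Fop Y₁) y⟫_ℂ := by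
        rw [adjoint_apply_component]; rfl
    _ = ⟪Fop Y₁ ((f : ∀ _ : ℕ, E) 0), y⟫_ℂ := adjoint_inner_right _ _ _

lemma apply_component_succ (Y₁ Y₂ : L2 E →L[ℂ] L2 E)
    (h : ∀ f g, ⟪Y₁ f, g⟫_ℂ = ⟪shiftL f, Y₂ g⟫_ℂ)
    (hc1 : ∀ f, Y₁ (shiftL f) = shiftL (Y₁ f))
    (hc2 : ∀ f, Y₂ (shiftL f) = shiftL (Y₂ f))
    (f : L2 E) (k : ℕ) :
    (Y₁ f : ∀ _ : ℕ, E) (k + 1)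
      = adjoint (Fop Y₂) ((f : ∀ _ : ℕ, E) k) + Fop Y₁ ((f : ∀ _ : ℕ, E) (k + 1)) := by
  apply ext_inner_right ℂ
  intro y
  have hkk : (k : ℕ) ≠ k + 1 := by omega
  calc ⟪(Y₁ f : ∀ _ : ℕ, E) (k + 1), y⟫_ℂ
      = ⟪Y₁ f, lp.single 2 (k + 1) y⟫_ℂ := (lp.inner_single_right _ _ _).symm
    _ = ⟪f, adjoint Y₁ (lp.single 2 (k + 1) y)⟫_ℂ := (adjoint_inner_right _ _ _).symm
    _ = ∑' m : ℕ, ⟪(f : ∀ _ : ℕ, E) m,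
          (adjoint Y₁ (lp.single 2 (k + 1) y) : ∀ _ : ℕ, E) m⟫_ℂ := lp.inner_eq_tsum _ _
    _ = ∑ m ∈ ({k, k + 1} : Finset ℕ), ⟪(f : ∀ _ : ℕ, E) m,
          (adjoint Y₁ (lp.single 2 (k + 1) y) : ∀ _ : ℕ, E) m⟫_ℂ := by
        apply tsum_eq_sum
        intro m hm
        simp only [Finset.mem_insert, Finset.mem_singleton] at hm
        push_neg at hm
        rw [adjoint_apply_component]
        rcases lt_or_gt_of_ne hm.2 with hlt | hgt
        · rw [entry_eq_zero_of_gt Y₁ Y₂ h hc1 hc2 (k + 1) m (by omega), my_adjoint_zero]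
          simp
        · rw [entry_eq_zero_of_lt Y₁ hc1 (k + 1) m (by omega), my_adjoint_zero]
          simp
    _ = ⟪(f : ∀ _ : ℕ, E) k, (adjoint Y₁ (lp.single 2 (k + 1) y) : ∀ _ : ℕ, E) k⟫_ℂ
        + ⟪(f : ∀ _ : ℕ, E) (k + 1),
            (adjoint Y₁ (lp.single 2 (k + 1) y) : ∀ _ : ℕ, E) (k + 1)⟫_ℂ :=
        Finset.sum_pair hkk
    _ = ⟪(f : ∀ _ : ℕ, E) k, Fop Y₂ y⟫_ℂ
        + ⟪(f : ∀ _ : ℕ, E) (k + 1), adjoint (Fop Y₁) y⟫_ℂ := by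
        rw [adjoint_apply_component, adjoint_apply_component,
          entry_subdiag Y₁ Y₂ h hc1 hc2 k, adjoint_adjoint, entry_diag Y₁ hc1 (k + 1)]
    _ = ⟪adjoint (Fop Y₂) ((f : ∀ _ : ℕ, E) k) + Fop Y₁ ((f : ∀ _ : ℕ, E) (k + 1)), y⟫_ℂ := by
        rw [inner_add_left, adjoint_inner_left, adjoint_inner_right]

/-- Structure theorem: an operator satisfying the shift relations is the Toeplitz operator
with linear symbol. -/
lemma toeplitz_structure (Y₁ Y₂ : L2 E →L[ℂ] L2 E)
    (h : ∀ f g, ⟪Y₁ f, g⟫_ℂ = ⟪shiftL f, Y₂ g⟫_ℂ)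
    (hc1 : ∀ f, Y₁ (shiftL f) = shiftL (Y₁ f))
    (hc2 : ∀ f, Y₂ (shiftL f) = shiftL (Y₂ f)) :
    Y₁ = diagL (Fop Y₁) + shiftL.comp (diagL (adjoint (Fop Y₂))) := by
  refine ContinuousLinearMap.ext fun f => lp.ext (funext fun k => ?_)
  rw [ContinuousLinearMap.add_apply, lp.coeFn_add, Pi.add_apply]
  cases k with
  | zero =>
      rw [apply_component_zero Y₁ Y₂ h hc1 f, ContinuousLinearMap.comp_apply,
        shiftL_apply_zero, diagL_apply, add_zero]
  | succ k =>
      rw [apply_component_succ Y₁ Y₂ h hc1 hc2 f k, ContinuousLinearMap.comp_apply,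
        shiftL_apply_succ, diagL_apply, diagL_apply, add_comm]

end GammaModel

section AuxBlock

namespace GammaModel

open ContinuousLinearMap
open scoped InnerProductSpace

variable {H K : Type*} [NormedAddCommGroup H] [InnerProductSpace ℂ H]
  [NormedAddCommGroup K] [InnerProductSpace ℂ K]

/-- Embed a pair into the `L²` direct sum. -/
def toPairL2 (h : H) (k : K) : WithLp 2 (H × K) := (WithLp.equiv 2 (H × K)).symm (h, k)

@[simp] lemma toPairL2_fst (h : H) (k : K) : (toPairL2 h k).fst = h := rfl

@[simp] lemma toPairL2_snd (h : H) (k : K) : (toPairL2 h k).snd = k := rfl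

@[simp] lemma blockLT_apply_fst (A : H →L[ℂ] H) (C : H →L[ℂ] K) (D : K →L[ℂ] K)
    (u : WithLp 2 (H × K)) : (blockLT A C D u).fst = A u.fst := rfl

@[simp] lemma blockLT_apply_snd (A : H →L[ℂ] H) (C : H →L[ℂ] K) (D : K →L[ℂ] K)
    (u : WithLp 2 (H × K)) : (blockLT A C D u).snd = C u.fst + D u.snd := rfl

lemma pair_inner (u v : WithLp 2 (H × K)) :
    ⟪u, v⟫_ℂ = ⟪u.fst, v.fst⟫_ℂ + ⟪u.snd, v.snd⟫_ℂ := rfl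

end GammaModel

end AuxBlock


open GammaModel ContinuousLinearMap
open scoped InnerProductSpace

set_option maxHeartbeats 1000000
set_option synthInstance.maxHeartbeats 400000

/-- (Schäffer-type model.) Suppose the lower-triangular block operators
`Ŵ_i = [[S_i, 0], [X_i, Y_i]]` together with the Schäffer dilation `Ŵ_n = [[S_n, 0], [𝐃, S]]`
form a commuting tuple satisfying `Ŵ_i = Ŵ_{n-i}* Ŵ_n`. Then there are unique operators
`F_1, …, F_{n-1}` on `𝒟_{S_n}` such that `Y_i` is the Toeplitz operator with symbol
`F_i + z F_{n-i}*`, `X_i h = (F_{n-i}* D_{S_n} h, 0, 0, …)`, and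
`S_i − S_{n-i}* S_n = D_{S_n} F_i D_{S_n}` (so the `F_i` are the fundamental operators). -/
theorem schaffer_model_structure {n : ℕ} (hn : 2 ≤ n)
    {H : Type*} [NormedAddCommGroup H] [InnerProductSpace ℂ H] [CompleteSpace H]
    (S : Fin n → H →L[ℂ] H) (hcomm : ∀ i j, S i * S j = S j * S i)
    (hSn : ‖S ⟨n - 1, by omega⟩‖ ≤ 1)
    (DT : H →L[ℂ] H) (hDTpos : DT.IsPositive)
    (hDTsq : DT * DT = 1 - adjoint (S ⟨n - 1, by omega⟩) * S ⟨n - 1, by omega⟩)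
    (Dbold : H →L[ℂ] L2 ↥((LinearMap.range (DT : H →ₗ[ℂ] H)).topologicalClosure))
    (hDbold : ∀ h : H,
      (((Dbold h : ∀ _ : ℕ, ↥((LinearMap.range (DT : H →ₗ[ℂ] H)).topologicalClosure)) 0 : H) = DT h) ∧
      (∀ k : ℕ, (Dbold h : ∀ _ : ℕ, ↥((LinearMap.range (DT : H →ₗ[ℂ] H)).topologicalClosure)) (k + 1) = 0))
    (X : Fin (n - 1) → H →L[ℂ] L2 ↥((LinearMap.range (DT : H →ₗ[ℂ] H)).topologicalClosure))
    (Y : Fin (n - 1) → L2 ↥((LinearMap.range (DT : H →ₗ[ℂ] H)).topologicalClosure)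
      →L[ℂ] L2 ↥((LinearMap.range (DT : H →ₗ[ℂ] H)).topologicalClosure))
    (hcommW : (∀ i j : Fin (n - 1),
        blockLT (S (Fin.castLE (by omega) i)) (X i) (Y i)
            * blockLT (S (Fin.castLE (by omega) j)) (X j) (Y j)
          = blockLT (S (Fin.castLE (by omega) j)) (X j) (Y j)
            * blockLT (S (Fin.castLE (by omega) i)) (X i) (Y i)) ∧
      (∀ i : Fin (n - 1),
        blockLT (S (Fin.castLE (by omega) i)) (X i) (Y i)
            * blockLT (S ⟨n - 1, by omega⟩) Dbold shiftL
          = blockLT (S ⟨n - 1, by omega⟩) Dbold shiftL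
            * blockLT (S (Fin.castLE (by omega) i)) (X i) (Y i)))
    (hrelW : ∀ i : Fin (n - 1),
      blockLT (S (Fin.castLE (by omega) i)) (X i) (Y i)
        = adjoint (blockLT (S (Fin.castLE (by omega) (Fin.rev i))) (X (Fin.rev i)) (Y (Fin.rev i)))
          * blockLT (S ⟨n - 1, by omega⟩) Dbold shiftL) :
    ∃! F : Fin (n - 1) → (↥((LinearMap.range (DT : H →ₗ[ℂ] H)).topologicalClosure)
        →L[ℂ] ↥((LinearMap.range (DT : H →ₗ[ℂ] H)).topologicalClosure)),
      ∀ i : Fin (n - 1),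
        (Y i = diagL (F i) + shiftL.comp (diagL (adjoint (F (Fin.rev i))))) ∧
        (∀ h : H,
          (((X i h : ∀ _ : ℕ, ↥((LinearMap.range (DT : H →ₗ[ℂ] H)).topologicalClosure)) 0 : H)
            = (↑((adjoint (F (Fin.rev i)))
                ⟨DT h, Submodule.le_topologicalClosure _ (LinearMap.mem_range_self _ _)⟩) : H)) ∧
          (∀ k : ℕ,
            (X i h : ∀ _ : ℕ, ↥((LinearMap.range (DT : H →ₗ[ℂ] H)).topologicalClosure)) (k + 1) = 0)) ∧
        (∀ h : H,
          S (Fin.castLE (by omega) i) h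
              - adjoint (S (Fin.castLE (by omega) (Fin.rev i))) (S ⟨n - 1, by omega⟩ h)
            = DT (↑(F i ⟨DT h, Submodule.le_topologicalClosure _ (LinearMap.mem_range_self _ _)⟩))) := by
  classical
  obtain ⟨hcommW1, hcommW2⟩ := hcommW
  -- the master inner-product identity coming from `Ŵ_i = Ŵ_{n-i}* Ŵ_n`
  have master : ∀ (i : Fin (n - 1)) (u v : WithLp 2 (H × L2 ↥((LinearMap.range (DT : H →ₗ[ℂ] H)).topologicalClosure))),
      ⟪blockLT (S (Fin.castLE (by omega) i)) (X i) (Y i) u, v⟫_ℂ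
        = ⟪blockLT (S ⟨n - 1, by omega⟩) Dbold shiftL u,
            blockLT (S (Fin.castLE (by omega) (Fin.rev i))) (X (Fin.rev i)) (Y (Fin.rev i)) v⟫_ℂ := by
    intro i u v
    rw [hrelW i, ContinuousLinearMap.mul_apply, adjoint_inner_left]
  have rel22 : ∀ (i : Fin (n - 1)) f g,
      ⟪Y i f, g⟫_ℂ = ⟪shiftL f, Y (Fin.rev i) g⟫_ℂ := by
    intro i f g
    have h0 := master i (toPairL2 0 f) (toPairL2 0 g)
    rw [pair_inner, pair_inner] at h0
    simpa only [blockLT_apply_fst, blockLT_apply_snd, toPairL2_fst, toPairL2_snd, map_zero,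
      zero_add, add_zero, inner_zero_left, inner_zero_right] using h0
  have rel21 : ∀ (i : Fin (n - 1)) (h : H) g,
      ⟪X i h, g⟫_ℂ = ⟪Dbold h, Y (Fin.rev i) g⟫_ℂ := by
    intro i h g
    have h0 := master i (toPairL2 h 0) (toPairL2 0 g)
    rw [pair_inner, pair_inner] at h0
    simpa only [blockLT_apply_fst, blockLT_apply_snd, toPairL2_fst, toPairL2_snd, map_zero,
      zero_add, add_zero, inner_zero_left, inner_zero_right] using h0
  have rel11 : ∀ (i : Fin (n - 1)) (h h' : H),
      ⟪S (Fin.castLE (by omega) i) h, h'⟫_ℂ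
        = ⟪S ⟨n - 1, by omega⟩ h, S (Fin.castLE (by omega) (Fin.rev i)) h'⟫_ℂ
          + ⟪Dbold h, X (Fin.rev i) h'⟫_ℂ := by
    intro i h h'
    have h0 := master i (toPairL2 h 0) (toPairL2 h' 0)
    rw [pair_inner, pair_inner] at h0
    simpa only [blockLT_apply_fst, blockLT_apply_snd, toPairL2_fst, toPairL2_snd, map_zero,
      zero_add, add_zero, inner_zero_left, inner_zero_right] using h0
  have commS : ∀ (i : Fin (n - 1)) f, Y i (shiftL f) = shiftL (Y i f) := by
    intro i f
    have h1 : (blockLT (S (Fin.castLE (by omega) i)) (X i) (Y i)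
          * blockLT (S ⟨n - 1, by omega⟩) Dbold shiftL) (toPairL2 0 f)
        = (blockLT (S ⟨n - 1, by omega⟩) Dbold shiftL
          * blockLT (S (Fin.castLE (by omega) i)) (X i) (Y i)) (toPairL2 0 f) := by
      rw [hcommW2 i]
    have h2 := congrArg (fun w : WithLp 2 (H × L2 ↥((LinearMap.range (DT : H →ₗ[ℂ] H)).topologicalClosure)) =>
      w.snd) h1
    simpa only [ContinuousLinearMap.mul_apply, blockLT_apply_fst, blockLT_apply_snd,
      toPairL2_fst, toPairL2_snd, map_zero, zero_add, add_zero] using h2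
  -- inner products against `Dbold h` only see the zeroth component
  have innerDb : ∀ (h : H) (w : L2 ↥((LinearMap.range (DT : H →ₗ[ℂ] H)).topologicalClosure)),
      ⟪Dbold h, w⟫_ℂ
        = ⟪(⟨DT h, Submodule.le_topologicalClosure _ (LinearMap.mem_range_self _ _)⟩ :
              ↥((LinearMap.range (DT : H →ₗ[ℂ] H)).topologicalClosure)),
            (w : ∀ _ : ℕ, ↥((LinearMap.range (DT : H →ₗ[ℂ] H)).topologicalClosure)) 0⟫_ℂ := by
    intro h w
    have hDb0 : (Dbold h : ∀ _ : ℕ, ↥((LinearMap.range (DT : H →ₗ[ℂ] H)).topologicalClosure)) 0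
        = ⟨DT h, Submodule.le_topologicalClosure _ (LinearMap.mem_range_self _ _)⟩ :=
      Subtype.ext ((hDbold h).1)
    calc ⟪Dbold h, w⟫_ℂ
        = ∑' m : ℕ, ⟪(Dbold h : ∀ _ : ℕ, _) m, (w : ∀ _ : ℕ, _) m⟫_ℂ := lp.inner_eq_tsum _ _
      _ = ⟪(Dbold h : ∀ _ : ℕ, _) 0, (w : ∀ _ : ℕ, _) 0⟫_ℂ := by
          apply tsum_eq_single 0
          intro m hm
          obtain ⟨m', rfl⟩ : ∃ m', m = m' + 1 := ⟨m - 1, by omega⟩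
          rw [(hDbold h).2 m']
          exact inner_zero_left _
      _ = _ := by rw [hDb0]
  -- structure of X i
  have hX0 : ∀ (i : Fin (n - 1)) (h : H),
      (X i h : ∀ _ : ℕ, ↥((LinearMap.range (DT : H →ₗ[ℂ] H)).topologicalClosure)) 0
        = adjoint (Fop (Y (Fin.rev i)))
            ⟨DT h, Submodule.le_topologicalClosure _ (LinearMap.mem_range_self _ _)⟩ := by
    intro i h
    apply ext_inner_right ℂ
    intro y
    calc ⟪(X i h : ∀ _ : ℕ, _) 0, y⟫_ℂ
        = ⟪X i h, lp.single 2 0 y⟫_ℂ := (lp.inner_single_right _ _ _).symm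
      _ = ⟪Dbold h, Y (Fin.rev i) (lp.single 2 0 y)⟫_ℂ := rel21 i h _
      _ = ⟪(⟨DT h, Submodule.le_topologicalClosure _ (LinearMap.mem_range_self _ _)⟩ :
              ↥((LinearMap.range (DT : H →ₗ[ℂ] H)).topologicalClosure)),
            (Y (Fin.rev i) (lp.single 2 0 y) : ∀ _ : ℕ, _) 0⟫_ℂ := innerDb h _
      _ = ⟪(⟨DT h, Submodule.le_topologicalClosure _ (LinearMap.mem_range_self _ _)⟩ :
              ↥((LinearMap.range (DT : H →ₗ[ℂ] H)).topologicalClosure)), Fop (Y (Fin.rev i)) y⟫_ℂ := rfl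
      _ = ⟪adjoint (Fop (Y (Fin.rev i)))
              ⟨DT h, Submodule.le_topologicalClosure _ (LinearMap.mem_range_self _ _)⟩, y⟫_ℂ :=
          (adjoint_inner_left _ _ _).symm
  have hXsucc : ∀ (i : Fin (n - 1)) (h : H) (k : ℕ),
      (X i h : ∀ _ : ℕ, ↥((LinearMap.range (DT : H →ₗ[ℂ] H)).topologicalClosure)) (k + 1) = 0 := by
    intro i h k
    apply ext_inner_right ℂ
    intro y
    calc ⟪(X i h : ∀ _ : ℕ, _) (k + 1), y⟫_ℂ
        = ⟪X i h, lp.single 2 (k + 1) y⟫_ℂ := (lp.inner_single_right _ _ _).symm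
      _ = ⟪Dbold h, Y (Fin.rev i) (lp.single 2 (k + 1) y)⟫_ℂ := rel21 i h _
      _ = ⟪(⟨DT h, Submodule.le_topologicalClosure _ (LinearMap.mem_range_self _ _)⟩ :
              ↥((LinearMap.range (DT : H →ₗ[ℂ] H)).topologicalClosure)),
            (Y (Fin.rev i) (lp.single 2 (k + 1) y) : ∀ _ : ℕ, _) 0⟫_ℂ := innerDb h _
      _ = ⟪(⟨DT h, Submodule.le_topologicalClosure _ (LinearMap.mem_range_self _ _)⟩ :
              ↥((LinearMap.range (DT : H →ₗ[ℂ] H)).topologicalClosure)),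
            entryOp (Y (Fin.rev i)) 0 (k + 1) y⟫_ℂ := rfl
      _ = 0 := by
          rw [entry_eq_zero_of_lt (Y (Fin.rev i)) (commS (Fin.rev i)) 0 (k + 1) (by omega)]
          simp
      _ = ⟪(0 : ↥((LinearMap.range (DT : H →ₗ[ℂ] H)).topologicalClosure)), y⟫_ℂ := (inner_zero_left _).symm
  refine ⟨fun i => Fop (Y i), fun i => ⟨?_, ?_, ?_⟩, ?_⟩
  · -- Toeplitz structure of Y i
    exact toeplitz_structure (Y i) (Y (Fin.rev i)) (rel22 i) (commS i) (commS (Fin.rev i))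
  · -- structure of X i
    intro h
    exact ⟨congrArg Subtype.val (hX0 i h), hXsucc i h⟩
  · -- fundamental operator equation
    intro h
    apply ext_inner_right ℂ
    intro h'
    have e2 : ⟪Dbold h, X (Fin.rev i) h'⟫_ℂ
        = ⟪DT ↑(Fop (Y i)
            ⟨DT h, Submodule.le_topologicalClosure _ (LinearMap.mem_range_self _ _)⟩), h'⟫_ℂ := by
      calc ⟪Dbold h, X (Fin.rev i) h'⟫_ℂ
          = ⟪(⟨DT h, Submodule.le_topologicalClosure _ (LinearMap.mem_range_self _ _)⟩ :
                ↥((LinearMap.range (DT : H →ₗ[ℂ] H)).topologicalClosure)),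
              (X (Fin.rev i) h' : ∀ _ : ℕ, _) 0⟫_ℂ := innerDb h _
        _ = ⟪(⟨DT h, Submodule.le_topologicalClosure _ (LinearMap.mem_range_self _ _)⟩ :
                ↥((LinearMap.range (DT : H →ₗ[ℂ] H)).topologicalClosure)),
              adjoint (Fop (Y (Fin.rev (Fin.rev i))))
                ⟨DT h', Submodule.le_topologicalClosure _ (LinearMap.mem_range_self _ _)⟩⟫_ℂ := by
            rw [hX0 (Fin.rev i) h']
        _ = ⟪(⟨DT h, Submodule.le_topologicalClosure _ (LinearMap.mem_range_self _ _)⟩ :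
                ↥((LinearMap.range (DT : H →ₗ[ℂ] H)).topologicalClosure)),
              adjoint (Fop (Y i))
                ⟨DT h', Submodule.le_topologicalClosure _ (LinearMap.mem_range_self _ _)⟩⟫_ℂ := by
            rw [Fin.rev_rev]
        _ = ⟪Fop (Y i)
                ⟨DT h, Submodule.le_topologicalClosure _ (LinearMap.mem_range_self _ _)⟩,
              (⟨DT h', Submodule.le_topologicalClosure _ (LinearMap.mem_range_self _ _)⟩ :
                ↥((LinearMap.range (DT : H →ₗ[ℂ] H)).topologicalClosure))⟫_ℂ := adjoint_inner_right _ _ _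
        _ = ⟪(↑(Fop (Y i)
                ⟨DT h, Submodule.le_topologicalClosure _ (LinearMap.mem_range_self _ _)⟩) : H),
              DT h'⟫_ℂ := Submodule.coe_inner _ _ _
        _ = ⟪adjoint DT ↑(Fop (Y i)
                ⟨DT h, Submodule.le_topologicalClosure _ (LinearMap.mem_range_self _ _)⟩),
              h'⟫_ℂ := (adjoint_inner_left _ _ _).symm
        _ = _ := by rw [hDTpos.isSelfAdjoint.adjoint_eq]
    rw [inner_sub_left, rel11 i h h', adjoint_inner_left, e2]
    ring
  · -- uniqueness
    intro F' hF'
    funext i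
    ext x
    have h2 : (Y i (lp.single 2 0 x) : ∀ _ : ℕ, ↥((LinearMap.range (DT : H →ₗ[ℂ] H)).topologicalClosure)) 0
        = F' i x := by
      rw [(hF' i).1, ContinuousLinearMap.add_apply, lp.coeFn_add, Pi.add_apply,
        ContinuousLinearMap.comp_apply, shiftL_apply_zero, diagL_apply, add_zero,
        lp.single_apply_self]
    exact congrArg Subtype.val h2.symm
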